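/- arXiv:1902.09210 — 5 statements merged into one kernel-verified Lean document; each statement's English description precedes it below -/
import Mathlib

section
/- Let G* be the graph on vertex set {1,...,5} with edge set E* = {{1,2},{1,3},{1,4},{1,5},{2,3},{2,4},{3,5},{4,5}}. Define configurations p, q : {1,...,5} → ℝ² by p₁ = q₁ = (0,2), p₂ = (-1/4,1/2), p₃ = (21/20,9/10), p₄ = q₄ = (-1,0), p₅ = q₅ = (1,0), q₂ = (-21/20,9/10), q₃ = (1/4,1/2). Then for every edge {i,j} ∈ E*, |pᵢ - pⱼ| = |qᵢ - qⱼ|; i.e., the frameworks G*(p) and G*(q) are equivalent. -/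
noncomputable def pt (a b : ℝ) : EuclideanSpace ℝ (Fin 2) := WithLp.toLp 2 ![a, b]

/-- The edges of the graph G*: vertex `i : Fin 5` represents vertex `i+1` of
`{1,...,5}`, so these pairs are {1,2},{1,3},{1,4},{1,5},{2,3},{2,4},{3,5},{4,5}. -/
def Estar : Set (Fin 5 × Fin 5) :=
  {(0,1), (0,2), (0,3), (0,4), (1,2), (1,3), (2,4), (3,4)}

/-- Configuration p of G*. -/
noncomputable def pstar : Fin 5 → EuclideanSpace ℝ (Fin 2) :=
  ![pt 0 2, pt (-1/4) (1/2), pt (21/20) (9/10), pt (-1) 0, pt 1 0]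

/-- Configuration q of G*. -/
noncomputable def qstar : Fin 5 → EuclideanSpace ℝ (Fin 2) :=
  ![pt 0 2, pt (-21/20) (9/10), pt (1/4) (1/2), pt (-1) 0, pt 1 0]

lemma dist_pt (a b c d : ℝ) :
    dist (pt a b) (pt c d) = Real.sqrt ((a - c)^2 + (b - d)^2) := by
  rw [EuclideanSpace.dist_eq]
  congr 1
  simp [pt, Fin.sum_univ_two, sq, Real.dist_eq, abs_mul_abs_self]

/-- The frameworks G*(p) and G*(q) are equivalent: corresponding edge lengths agree. -/
theorem stmt_4 :
    ∀ e ∈ Estar, dist (pstar e.1) (pstar e.2) = dist (qstar e.1) (qstar e.2) := by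
  intro e he
  rcases he with h|h|h|h|h|h|h|h <;> subst h <;>
    simp only [pstar, qstar, Matrix.cons_val_zero, Matrix.cons_val_one, Matrix.head_cons,
      Matrix.cons_val_fin_one, Matrix.cons_val] <;>
    norm_num [Matrix.cons_val', Matrix.cons_val_succ, dist_pt]
end

section
/- Let G* be the graph on {1,...,5} with edges {{1,2},{1,3},{1,4},{1,5},{2,3},{2,4},{3,5},{4,5}} and let p : {1,...,5} → ℝ² be given by p₁ = (0,2), p₂ = (-1/4,1/2), p₃ = (21/20,9/10), p₄ = (-1,0), p₅ = (1,0). Then the framework G*(p) is not globally rigid in ℝ²: there exists a configuration q : {1,...,5} → ℝ² such that |pᵢ - pⱼ| = |qᵢ - qⱼ| for every edge {i,j}, but |p₂ - p₅| ≠ |q₂ - q₅|. -/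
/-- G*(p) is not globally rigid: there is an equivalent configuration q with
|p₂ - p₅| ≠ |q₂ - q₅|. -/
theorem stmt_6 :
    ∃ q : Fin 5 → EuclideanSpace ℝ (Fin 2),
      (∀ e ∈ Estar, dist (pstar e.1) (pstar e.2) = dist (q e.1) (q e.2)) ∧
      dist (pstar 1) (pstar 4) ≠ dist (q 1) (q 4) := by
  refine ⟨![pt 0 2, pt (-1/4) (1/2), pt (-27/20) (13/10), pt (-1) 0,
      pt (-11/5) (8/5)], ?_, ?_⟩
  · intro e he
    simp only [Estar, Set.mem_insert_iff, Set.mem_singleton_iff] at he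
    rcases he with h | h | h | h | h | h | h | h <;> subst h <;>
      simp only [pstar, Matrix.cons_val] <;>
      norm_num [dist_pt, Matrix.cons_val_zero, Matrix.cons_val_one,
        Matrix.head_cons]
  · simp only [pstar, Matrix.cons_val]
    norm_num [dist_pt, Matrix.cons_val_zero, Matrix.cons_val_one,
      Matrix.head_cons, show (4 : Fin 5) = ⟨4, by norm_num⟩ from rfl]
    intro h
    have h2 := congrArg (fun x : ℝ => x ^ 2) h
    simp only [div_pow, Real.sq_sqrt (by norm_num : (29:ℝ) ≥ 0).le,
      Real.sq_sqrt (by norm_num : (16:ℝ) ≥ 0).le,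
      Real.sq_sqrt (by norm_num : (401:ℝ) ≥ 0).le,
      Real.sq_sqrt (by norm_num : (80:ℝ) ≥ 0).le] at h2
    norm_num at h2
end

section
/- Let G* be the graph on {1,...,5} with edges {{1,2},{1,3},{1,4},{1,5},{2,3},{2,4},{3,5},{4,5}}, let p be given by p₁=(0,2), p₂=(-1/4,1/2), p₃=(21/20,9/10), p₄=(-1,0), p₅=(1,0), and let A(x₁,x₂)=(x₁,x₂/2). Suppose q : {1,...,5} → ℝ² satisfies |qᵢ - qⱼ| = |Apᵢ - Apⱼ| for every edge {i,j}, and additionally q₁ = Ap₁, q₄ = Ap₄, q₅ = Ap₅. Then q₂ = Ap₂ and q₃ = Ap₃. -/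
/-- The affine map A(x₁,x₂) = (x₁, x₂/2). -/
noncomputable def Amap (x : EuclideanSpace ℝ (Fin 2)) : EuclideanSpace ℝ (Fin 2) :=
  WithLp.toLp 2 ![x 0, x 1 / 2]

lemma dist_sq_eq {x y z w : EuclideanSpace ℝ (Fin 2)} (h : dist x y = dist z w) :
    (x 0 - y 0)^2 + (x 1 - y 1)^2 = (z 0 - w 0)^2 + (z 1 - w 1)^2 := by
  have hx : dist x y ^ 2 = (x 0 - y 0)^2 + (x 1 - y 1)^2 := by
    rw [EuclideanSpace.dist_eq, Fin.sum_univ_two, Real.dist_eq, Real.dist_eq,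
      Real.sq_sqrt (by positivity), sq_abs, sq_abs]
  have hz : dist z w ^ 2 = (z 0 - w 0)^2 + (z 1 - w 1)^2 := by
    rw [EuclideanSpace.dist_eq, Fin.sum_univ_two, Real.dist_eq, Real.dist_eq,
      Real.sq_sqrt (by positivity), sq_abs, sq_abs]
  rw [← hx, ← hz, h]

/-- If q is equivalent to G*(Ap) and agrees with Ap on the joints 1, 4, 5, then
q also agrees with Ap on the joints 2 and 3. -/
theorem stmt_11 (q : Fin 5 → EuclideanSpace ℝ (Fin 2))
    (he : ∀ e ∈ Estar, dist (q e.1) (q e.2) = dist (Amap (pstar e.1)) (Amap (pstar e.2)))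
    (h1 : q 0 = Amap (pstar 0)) (h4 : q 3 = Amap (pstar 3)) (h5 : q 4 = Amap (pstar 4)) :
    q 1 = Amap (pstar 1) ∧ q 2 = Amap (pstar 2) := by
  have e01 := dist_sq_eq (he (0,1) (by simp [Estar]))
  have e02 := dist_sq_eq (he (0,2) (by simp [Estar]))
  have e12 := dist_sq_eq (he (1,2) (by simp [Estar]))
  have e13 := dist_sq_eq (he (1,3) (by simp [Estar]))
  have e24 := dist_sq_eq (he (2,4) (by simp [Estar]))
  set a := q 1 0 with hA
  set b := q 1 1 with hB
  set c := q 2 0 with hC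
  set d := q 2 1 with hD
  rw [h1] at e01 e02
  rw [h4] at e13
  rw [h5] at e24
  simp only [Amap, pstar, pt, Matrix.cons_val_zero, Matrix.cons_val_one, Matrix.head_cons,
    Matrix.cons_val_fin_one, Matrix.cons_val', Matrix.empty_val',
    Matrix.cons_val_two, Matrix.tail_cons, Matrix.cons_val_three, Matrix.cons_val_four] at e01 e02 e12 e13 e24
  norm_num at e01 e02 e12 e13 e24
  -- e01 : (0 - a)^2 + (1 - b)^2 = 5/8, etc.
  have hb : b = -a := by linear_combination (e13 - e01)/2
  have hd : c = d + 3/5 := by linear_combination (e02 - e24)/2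
  rw [hb, hd] at e12
  have ha : (4*a + 1) * (4*a + 3) = 0 := by linear_combination 8*e01 + (8*a - 8*b + 16)*hb
  have hdd : (20*d - 9) * (20*d + 1) = 0 := by linear_combination 200*e24 - (200*(c + d - 7/5))*hd
  have ha' : a = -1/4 ∨ a = -3/4 := by
    rcases mul_eq_zero.mp ha with h | h
    · left; linarith
    · right; linarith
  have hd' : d = 9/20 ∨ d = -1/20 := by
    rcases mul_eq_zero.mp hdd with h | h
    · left; linarith
    · right; linarith
  have key : a = -1/4 ∧ d = 9/20 := by
    rcases ha' with ha' | ha' <;> rcases hd' with hd' | hd'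
    · exact ⟨ha', hd'⟩
    · exfalso; rw [ha', hd'] at e12; norm_num at e12
    · exfalso; rw [ha', hd'] at e12; norm_num at e12
    · exfalso; rw [ha', hd'] at e12; norm_num at e12
  obtain ⟨ka, kd⟩ := key
  constructor
  · ext i
    fin_cases i
    · show a = _
      norm_num [Amap, pstar, pt, ka]
    · show b = _
      simp [Amap, pstar, pt]
      linarith [ka, hb]
  · ext i
    fin_cases i
    · show c = _
      simp [Amap, pstar, pt]
      linarith [kd, hd]
    · show d = _
      simp [Amap, pstar, pt]
      linarith [kd]
end

section
/- Let G* be the graph on {1,...,5} with edges {{1,2},{1,3},{1,4},{1,5},{2,3},{2,4},{3,5},{4,5}}, p the configuration p₁=(0,2), p₂=(-1/4,1/2), p₃=(21/20,9/10), p₄=(-1,0), p₅=(1,0), and A(x₁,x₂)=(x₁,x₂/2). Then the framework G*(Ap) is globally rigid in ℝ²: every configuration q : {1,...,5} → ℝ² with |qᵢ-qⱼ| = |Apᵢ-Apⱼ| for all edges {i,j} satisfies |qᵢ-qⱼ| = |Apᵢ-Apⱼ| for all i,j ∈ {1,...,5}. -/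
/-- Half the Cayley–Menger determinant of four points, as a polynomial in the
six squared distances. -/
def cmpoly (u v w p q r : ℝ) : ℝ :=
  -(p*q*r) + w*p*r + w*p*q - w*p^2 - w^2*p + v*q*r - v*q^2 + v*p*q - v*w*r
    + v*w*q + v*w*p - v^2*q - u*r^2 + u*q*r + u*p*r + u*w*r - u*w*q + u*w*p
    + u*v*r + u*v*q - u*v*p - u^2*r

/-- Four points in the plane have vanishing Cayley–Menger determinant. -/
lemma cm_planar (a1 a2 b1 b2 c1 c2 d1 d2 : ℝ) :
    cmpoly ((a1-b1)^2+(a2-b2)^2) ((a1-c1)^2+(a2-c2)^2) ((a1-d1)^2+(a2-d2)^2)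
      ((b1-c1)^2+(b2-c2)^2) ((b1-d1)^2+(b2-d2)^2) ((c1-d1)^2+(c2-d2)^2) = 0 := by
  simp only [cmpoly]; ring

lemma dist_sq (a b : EuclideanSpace ℝ (Fin 2)) :
    dist a b ^ 2 = (a 0 - b 0)^2 + (a 1 - b 1)^2 := by
  rw [EuclideanSpace.dist_eq, Real.sq_sqrt (by positivity)]
  simp [Fin.sum_univ_two, Real.dist_eq, sq_abs]

lemma dist_eq_of_sq_eq {a b c d : EuclideanSpace ℝ (Fin 2)}
    (h : dist a b ^ 2 = dist c d ^ 2) : dist a b = dist c d := by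
  have h1 : (0:ℝ) ≤ dist a b := dist_nonneg
  have h2 : (0:ℝ) ≤ dist c d := dist_nonneg
  have h3 : (dist a b - dist c d) * (dist a b + dist c d) = 0 := by linear_combination h
  rcases mul_eq_zero.1 h3 with h' | h' <;> linarith

/-- The framework G*(Ap) is globally rigid in the plane: any configuration with the
same edge lengths has the same distances between all pairs of joints. -/
theorem stmt_13 (q : Fin 5 → EuclideanSpace ℝ (Fin 2))
    (he : ∀ e ∈ Estar, dist (q e.1) (q e.2) = dist (Amap (pstar e.1)) (Amap (pstar e.2))) :
    ∀ i j : Fin 5, dist (q i) (q j) = dist (Amap (pstar i)) (Amap (pstar j)) := by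
  -- edge equalities from the hypothesis
  have d01 : dist (q 0) (q 1) = dist (Amap (pstar 0)) (Amap (pstar 1)) := he (0,1) (by simp [Estar])
  have d02 : dist (q 0) (q 2) = dist (Amap (pstar 0)) (Amap (pstar 2)) := he (0,2) (by simp [Estar])
  have d03 : dist (q 0) (q 3) = dist (Amap (pstar 0)) (Amap (pstar 3)) := he (0,3) (by simp [Estar])
  have d04 : dist (q 0) (q 4) = dist (Amap (pstar 0)) (Amap (pstar 4)) := he (0,4) (by simp [Estar])
  have d12 : dist (q 1) (q 2) = dist (Amap (pstar 1)) (Amap (pstar 2)) := he (1,2) (by simp [Estar])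
  have d13 : dist (q 1) (q 3) = dist (Amap (pstar 1)) (Amap (pstar 3)) := he (1,3) (by simp [Estar])
  have d24 : dist (q 2) (q 4) = dist (Amap (pstar 2)) (Amap (pstar 4)) := he (2,4) (by simp [Estar])
  have d34 : dist (q 3) (q 4) = dist (Amap (pstar 3)) (Amap (pstar 4)) := he (3,4) (by simp [Estar])
  -- numeric values of squared distances of the target configuration
  have t01 : dist (Amap (pstar 0)) (Amap (pstar 1)) ^ 2 = 5/8 := by
    rw [dist_sq]; simp [Amap, pstar, pt]; norm_num
  have t02 : dist (Amap (pstar 0)) (Amap (pstar 2)) ^ 2 = 281/200 := by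
    rw [dist_sq]; simp [Amap, pstar, pt]; norm_num
  have t03 : dist (Amap (pstar 0)) (Amap (pstar 3)) ^ 2 = 2 := by
    rw [dist_sq]; simp [Amap, pstar, pt]; norm_num
  have t04 : dist (Amap (pstar 0)) (Amap (pstar 4)) ^ 2 = 2 := by
    rw [dist_sq]; simp [Amap, pstar, pt]; norm_num
  have t12 : dist (Amap (pstar 1)) (Amap (pstar 2)) ^ 2 = 173/100 := by
    rw [dist_sq]; simp [Amap, pstar, pt]; norm_num
  have t13 : dist (Amap (pstar 1)) (Amap (pstar 3)) ^ 2 = 5/8 := by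
    rw [dist_sq]; simp [Amap, pstar, pt]; norm_num
  have t24 : dist (Amap (pstar 2)) (Amap (pstar 4)) ^ 2 = 41/200 := by
    rw [dist_sq]; simp [Amap, pstar, pt]; norm_num
  have t34 : dist (Amap (pstar 3)) (Amap (pstar 4)) ^ 2 = 4 := by
    rw [dist_sq]; simp [Amap, pstar, pt]; norm_num
  have t14 : dist (Amap (pstar 1)) (Amap (pstar 4)) ^ 2 = 13/8 := by
    rw [dist_sq]; simp [Amap, pstar, pt]; norm_num
  have t23 : dist (Amap (pstar 2)) (Amap (pstar 3)) ^ 2 = 881/200 := by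
    rw [dist_sq]; simp [Amap, pstar, pt]; norm_num
  -- coordinate forms of the known squared distances of q
  have e01 : (q 0 0 - q 1 0)^2 + (q 0 1 - q 1 1)^2 = 5/8 := by
    rw [← dist_sq, d01]; exact t01
  have e02 : (q 0 0 - q 2 0)^2 + (q 0 1 - q 2 1)^2 = 281/200 := by
    rw [← dist_sq, d02]; exact t02
  have e03 : (q 0 0 - q 3 0)^2 + (q 0 1 - q 3 1)^2 = 2 := by
    rw [← dist_sq, d03]; exact t03
  have e04 : (q 0 0 - q 4 0)^2 + (q 0 1 - q 4 1)^2 = 2 := by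
    rw [← dist_sq, d04]; exact t04
  have e12 : (q 1 0 - q 2 0)^2 + (q 1 1 - q 2 1)^2 = 173/100 := by
    rw [← dist_sq, d12]; exact t12
  have e13 : (q 1 0 - q 3 0)^2 + (q 1 1 - q 3 1)^2 = 5/8 := by
    rw [← dist_sq, d13]; exact t13
  have e24 : (q 2 0 - q 4 0)^2 + (q 2 1 - q 4 1)^2 = 41/200 := by
    rw [← dist_sq, d24]; exact t24
  have e34 : (q 3 0 - q 4 0)^2 + (q 3 1 - q 4 1)^2 = 4 := by
    rw [← dist_sq, d34]; exact t34
  -- Cayley–Menger relations pinning down the two missing squared distances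
  have h1 := cm_planar (q 0 0) (q 0 1) (q 1 0) (q 1 1) (q 2 0) (q 2 1) (q 4 0) (q 4 1)
  rw [e01, e02, e04, e12, e24] at h1
  have h2 := cm_planar (q 0 0) (q 0 1) (q 1 0) (q 1 1) (q 3 0) (q 3 1) (q 4 0) (q 4 1)
  rw [e01, e03, e04, e13, e34] at h2
  have h3 := cm_planar (q 0 0) (q 0 1) (q 1 0) (q 1 1) (q 2 0) (q 2 1) (q 3 0) (q 3 1)
  rw [e01, e02, e03, e12, e13] at h3
  have h4 := cm_planar (q 0 0) (q 0 1) (q 2 0) (q 2 1) (q 3 0) (q 3 1) (q 4 0) (q 4 1)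
  rw [e02, e03, e04, e24, e34] at h4
  simp only [cmpoly] at h1 h2 h3 h4
  have hx : (q 1 0 - q 4 0)^2 + (q 1 1 - q 4 1)^2 = 13/8 := by
    linear_combination (-25/24 : ℝ) * h1 + (281/384 : ℝ) * h2
  have hy : (q 2 0 - q 3 0)^2 + (q 2 1 - q 3 1)^2 = 881/200 := by
    linear_combination (-5/3 : ℝ) * h3 + (25/48 : ℝ) * h4
  -- the two non-edge distance equalities
  have d14 : dist (q 1) (q 4) = dist (Amap (pstar 1)) (Amap (pstar 4)) := by
    apply dist_eq_of_sq_eq; rw [dist_sq, hx, t14]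
  have d23 : dist (q 2) (q 3) = dist (Amap (pstar 2)) (Amap (pstar 3)) := by
    apply dist_eq_of_sq_eq; rw [dist_sq, hy, t23]
  intro i j
  fin_cases i <;> fin_cases j <;>
    first
      | assumption
      | (rw [dist_comm (q _) _, dist_comm (Amap _) _]; assumption)
      | simp only [dist_self]
end

section
/- There exists a finite graph G, a configuration p of G in ℝ², and an affine bijection A : ℝ² → ℝ² such that the framework G(p) is not globally rigid in ℝ² while G(A∘p) is globally rigid in ℝ². -/
set_option linter.unnecessarySeqFocus false

/-- A framework `(E, p)` on vertex set `V` is globally rigid in ℝ² iff every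
configuration with the same edge lengths has the same distances between all pairs. -/
def GloballyRigid {V : Type*} (E : Set (V × V)) (p : V → EuclideanSpace ℝ (Fin 2)) : Prop :=
  ∀ q : V → EuclideanSpace ℝ (Fin 2),
    (∀ e ∈ E, dist (p e.1) (p e.2) = dist (q e.1) (q e.2)) →
    ∀ i j : V, dist (p i) (p j) = dist (q i) (q j)

namespace Stmt14Aux

lemma sqd (x y : EuclideanSpace ℝ (Fin 2)) :
    dist x y ^ 2 = (x 0 - y 0)^2 + (x 1 - y 1)^2 := by
  rw [EuclideanSpace.dist_eq, Real.sq_sqrt (by positivity)]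
  rw [Fin.sum_univ_two, Real.dist_eq, Real.dist_eq, sq_abs, sq_abs]

lemma dist_eq_of_sq {x y u v : EuclideanSpace ℝ (Fin 2)}
    (h : (x 0 - y 0)^2 + (x 1 - y 1)^2 = (u 0 - v 0)^2 + (u 1 - v 1)^2) :
    dist x y = dist u v := by
  have h2 : dist x y ^ 2 = dist u v ^ 2 := by rw [sqd, sqd, h]
  rw [← Real.sqrt_sq (dist_nonneg (x := x) (y := y)),
      ← Real.sqrt_sq (dist_nonneg (x := u) (y := v)), h2]

lemma sq_of_dist_eq {x y u v : EuclideanSpace ℝ (Fin 2)} (h : dist x y = dist u v) :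
    (x 0 - y 0)^2 + (x 1 - y 1)^2 = (u 0 - v 0)^2 + (u 1 - v 1)^2 := by
  rw [← sqd, ← sqd, h]

noncomputable def flexP : Fin 5 → EuclideanSpace ℝ (Fin 2) :=
  ![!₂[0,0], !₂[1,0], !₂[3,4], !₂[-33,56], !₂[-5,-12]]

noncomputable def flexQ : Fin 5 → EuclideanSpace ℝ (Fin 2) :=
  ![!₂[0,0], !₂[1,0], !₂[3,-4], !₂[63,16], !₂[-5,-12]]

noncomputable def rigP : Fin 5 → EuclideanSpace ℝ (Fin 2) :=
  ![!₂[0,0], !₂[1,1], !₂[3,7], !₂[-33,23], !₂[-5,-17]]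

def EW : Set (Fin 5 × Fin 5) :=
  {(0,1), (0,2), (0,3), (0,4), (1,2), (2,3), (3,4), (4,1)}

lemma rigP_0_0 : rigP 0 0 = 0 := rfl
lemma rigP_0_1 : rigP 0 1 = 0 := rfl
lemma rigP_1_0 : rigP 1 0 = 1 := rfl
lemma rigP_1_1 : rigP 1 1 = 1 := rfl
lemma rigP_2_0 : rigP 2 0 = 3 := rfl
lemma rigP_2_1 : rigP 2 1 = 7 := rfl
lemma rigP_3_0 : rigP 3 0 = -33 := rfl
lemma rigP_3_1 : rigP 3 1 = 23 := rfl
lemma rigP_4_0 : rigP 4 0 = -5 := rfl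
lemma rigP_4_1 : rigP 4 1 = -17 := rfl
lemma flexP_0_0 : flexP 0 0 = 0 := rfl
lemma flexP_0_1 : flexP 0 1 = 0 := rfl
lemma flexP_1_0 : flexP 1 0 = 1 := rfl
lemma flexP_1_1 : flexP 1 1 = 0 := rfl
lemma flexP_2_0 : flexP 2 0 = 3 := rfl
lemma flexP_2_1 : flexP 2 1 = 4 := rfl
lemma flexP_3_0 : flexP 3 0 = -33 := rfl
lemma flexP_3_1 : flexP 3 1 = 56 := rfl
lemma flexP_4_0 : flexP 4 0 = -5 := rfl
lemma flexP_4_1 : flexP 4 1 = -12 := rfl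
lemma flexQ_0_0 : flexQ 0 0 = 0 := rfl
lemma flexQ_0_1 : flexQ 0 1 = 0 := rfl
lemma flexQ_1_0 : flexQ 1 0 = 1 := rfl
lemma flexQ_1_1 : flexQ 1 1 = 0 := rfl
lemma flexQ_2_0 : flexQ 2 0 = 3 := rfl
lemma flexQ_2_1 : flexQ 2 1 = -4 := rfl
lemma flexQ_3_0 : flexQ 3 0 = 63 := rfl
lemma flexQ_3_1 : flexQ 3 1 = 16 := rfl
lemma flexQ_4_0 : flexQ 4 0 = -5 := rfl
lemma flexQ_4_1 : flexQ 4 1 = -12 := rfl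

noncomputable def shL : EuclideanSpace ℝ (Fin 2) ≃ₗ[ℝ] EuclideanSpace ℝ (Fin 2) where
  toFun v := !₂[v 0, v 0 + v 1]
  invFun v := !₂[v 0, v 1 - v 0]
  map_add' u v := by
    ext k; fin_cases k <;> simp [PiLp.add_apply] <;> ring
  map_smul' c v := by
    ext k; fin_cases k <;> simp [PiLp.smul_apply] <;> ring
  left_inv v := by ext k; fin_cases k <;> simp
  right_inv v := by ext k; fin_cases k <;> simp

noncomputable def shA : EuclideanSpace ℝ (Fin 2) ≃ᵃ[ℝ] EuclideanSpace ℝ (Fin 2) :=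
  shL.toAffineEquiv

lemma comp_eq : ⇑shA ∘ flexP = rigP := by
  funext i
  fin_cases i <;> (ext k; fin_cases k <;> (simp [shA, shL, flexP, rigP]; try norm_num))

lemma rigid : GloballyRigid EW rigP := by
  intro q hq
  have Hs1 : (q 0 0 - q 1 0)^2 + (q 0 1 - q 1 1)^2 = 2 := by
    have h := sq_of_dist_eq (hq (0,1) (by simp [EW]))
    simp only [rigP_0_0, rigP_0_1, rigP_1_0, rigP_1_1, rigP_2_0, rigP_2_1, rigP_3_0, rigP_3_1, rigP_4_0, rigP_4_1] at h
    linear_combination -h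
  have Hs2 : (q 0 0 - q 2 0)^2 + (q 0 1 - q 2 1)^2 = 58 := by
    have h := sq_of_dist_eq (hq (0,2) (by simp [EW]))
    simp only [rigP_0_0, rigP_0_1, rigP_1_0, rigP_1_1, rigP_2_0, rigP_2_1, rigP_3_0, rigP_3_1, rigP_4_0, rigP_4_1] at h
    linear_combination -h
  have Hs3 : (q 0 0 - q 3 0)^2 + (q 0 1 - q 3 1)^2 = 1618 := by
    have h := sq_of_dist_eq (hq (0,3) (by simp [EW]))
    simp only [rigP_0_0, rigP_0_1, rigP_1_0, rigP_1_1, rigP_2_0, rigP_2_1, rigP_3_0, rigP_3_1, rigP_4_0, rigP_4_1] at h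
    linear_combination -h
  have Hs4 : (q 0 0 - q 4 0)^2 + (q 0 1 - q 4 1)^2 = 314 := by
    have h := sq_of_dist_eq (hq (0,4) (by simp [EW]))
    simp only [rigP_0_0, rigP_0_1, rigP_1_0, rigP_1_1, rigP_2_0, rigP_2_1, rigP_3_0, rigP_3_1, rigP_4_0, rigP_4_1] at h
    linear_combination -h
  have Hr12 : (q 1 0 - q 2 0)^2 + (q 1 1 - q 2 1)^2 = 40 := by
    have h := sq_of_dist_eq (hq (1,2) (by simp [EW]))
    simp only [rigP_0_0, rigP_0_1, rigP_1_0, rigP_1_1, rigP_2_0, rigP_2_1, rigP_3_0, rigP_3_1, rigP_4_0, rigP_4_1] at h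
    linear_combination -h
  have Hr23 : (q 2 0 - q 3 0)^2 + (q 2 1 - q 3 1)^2 = 1552 := by
    have h := sq_of_dist_eq (hq (2,3) (by simp [EW]))
    simp only [rigP_0_0, rigP_0_1, rigP_1_0, rigP_1_1, rigP_2_0, rigP_2_1, rigP_3_0, rigP_3_1, rigP_4_0, rigP_4_1] at h
    linear_combination -h
  have Hr34 : (q 3 0 - q 4 0)^2 + (q 3 1 - q 4 1)^2 = 2384 := by
    have h := sq_of_dist_eq (hq (3,4) (by simp [EW]))
    simp only [rigP_0_0, rigP_0_1, rigP_1_0, rigP_1_1, rigP_2_0, rigP_2_1, rigP_3_0, rigP_3_1, rigP_4_0, rigP_4_1] at h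
    linear_combination -h
  have Hr41 : (q 4 0 - q 1 0)^2 + (q 4 1 - q 1 1)^2 = 360 := by
    have h := sq_of_dist_eq (hq (4,1) (by simp [EW]))
    simp only [rigP_0_0, rigP_0_1, rigP_1_0, rigP_1_1, rigP_2_0, rigP_2_1, rigP_3_0, rigP_3_1, rigP_4_0, rigP_4_1] at h
    linear_combination -h
  have hd12 : ((q 1 0 - q 0 0)*(q 2 0 - q 0 0) + (q 1 1 - q 0 1)*(q 2 1 - q 0 1)) = 10 := by linear_combination (Hs1 + Hs2 - Hr12)/2
  have hd23 : ((q 2 0 - q 0 0)*(q 3 0 - q 0 0) + (q 2 1 - q 0 1)*(q 3 1 - q 0 1)) = 62 := by linear_combination (Hs2 + Hs3 - Hr23)/2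
  have hd34 : ((q 3 0 - q 0 0)*(q 4 0 - q 0 0) + (q 3 1 - q 0 1)*(q 4 1 - q 0 1)) = -226 := by linear_combination (Hs3 + Hs4 - Hr34)/2
  have hd14 : ((q 1 0 - q 0 0)*(q 4 0 - q 0 0) + (q 1 1 - q 0 1)*(q 4 1 - q 0 1)) = -22 := by linear_combination (Hs1 + Hs4 - Hr41)/2
  have K1 : (((q 1 0 - q 0 0)*(q 3 0 - q 0 0) + (q 1 1 - q 0 1)*(q 3 1 - q 0 1)) + 10) * (29*((q 1 0 - q 0 0)*(q 3 0 - q 0 0) + (q 1 1 - q 0 1)*(q 3 1 - q 0 1)) - 910) = 0 := by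
    linear_combination ((-(1:ℝ)/2) * (((q 2 0 - q 0 0)*(q 3 0 - q 0 0) + (q 2 1 - q 0 1)*(q 3 1 - q 0 1))^2 - ((q 2 0 - q 0 0)^2 + (q 2 1 - q 0 1)^2)*((q 3 0 - q 0 0)^2 + (q 3 1 - q 0 1)^2))) * Hs1 + ((-(1:ℝ)/2) * (((q 1 0 - q 0 0)*(q 3 0 - q 0 0) + (q 1 1 - q 0 1)*(q 3 1 - q 0 1))^2 - 2*((q 3 0 - q 0 0)^2 + (q 3 1 - q 0 1)^2))) * Hs2 + ((-(1:ℝ)/2) * (((q 1 0 - q 0 0)*(q 2 0 - q 0 0) + (q 1 1 - q 0 1)*(q 2 1 - q 0 1))^2 - 116)) * Hs3 + ((-(1:ℝ)/2) * (-2*((q 1 0 - q 0 0)*(q 3 0 - q 0 0) + (q 1 1 - q 0 1)*(q 3 1 - q 0 1))*((q 2 0 - q 0 0)*(q 3 0 - q 0 0) + (q 2 1 - q 0 1)*(q 3 1 - q 0 1)) + 1618*(((q 1 0 - q 0 0)*(q 2 0 - q 0 0) + (q 1 1 - q 0 1)*(q 2 1 - q 0 1)) + 10))) * hd12 + ((-(1:ℝ)/2)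 * (-2*(10:ℝ)*((q 1 0 - q 0 0)*(q 3 0 - q 0 0) + (q 1 1 - q 0 1)*(q 3 1 - q 0 1)) + 2*(((q 2 0 - q 0 0)*(q 3 0 - q 0 0) + (q 2 1 - q 0 1)*(q 3 1 - q 0 1)) + 62))) * hd23
  have K2 : (((q 1 0 - q 0 0)*(q 3 0 - q 0 0) + (q 1 1 - q 0 1)*(q 3 1 - q 0 1)) + 10) * (157*((q 1 0 - q 0 0)*(q 3 0 - q 0 0) + (q 1 1 - q 0 1)*(q 3 1 - q 0 1)) - 6542) = 0 := by
    linear_combination ((-(1:ℝ)/2) * (((q 4 0 - q 0 0)*(q 3 0 - q 0 0) + (q 4 1 - q 0 1)*(q 3 1 - q 0 1))^2 - ((q 4 0 - q 0 0)^2 + (q 4 1 - q 0 1)^2)*((q 3 0 - q 0 0)^2 + (q 3 1 - q 0 1)^2))) * Hs1 + ((-(1:ℝ)/2) * (((q 1 0 - q 0 0)*(q 3 0 - q 0 0) + (q 1 1 - q 0 1)*(q 3 1 - q 0 1))^2 - 2*((q 3 0 - q 0 0)^2 + (q 3 1 - q 0 1)^2))) * Hs4 + ((-(1:ℝ)/2)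 * (((q 1 0 - q 0 0)*(q 4 0 - q 0 0) + (q 1 1 - q 0 1)*(q 4 1 - q 0 1))^2 - 628)) * Hs3 + ((-(1:ℝ)/2) * (-2*((q 1 0 - q 0 0)*(q 3 0 - q 0 0) + (q 1 1 - q 0 1)*(q 3 1 - q 0 1))*((q 4 0 - q 0 0)*(q 3 0 - q 0 0) + (q 4 1 - q 0 1)*(q 3 1 - q 0 1)) + 1618*(((q 1 0 - q 0 0)*(q 4 0 - q 0 0) + (q 1 1 - q 0 1)*(q 4 1 - q 0 1)) + -22))) * hd14 + ((-(1:ℝ)/2) * (-2*(-22:ℝ)*((q 1 0 - q 0 0)*(q 3 0 - q 0 0) + (q 1 1 - q 0 1)*(q 3 1 - q 0 1)) + 2*(((q 4 0 - q 0 0)*(q 3 0 - q 0 0) + (q 4 1 - q 0 1)*(q 3 1 - q 0 1)) + -226))) * hd34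
  have K3 : (((q 2 0 - q 0 0)*(q 4 0 - q 0 0) + (q 2 1 - q 0 1)*(q 4 1 - q 0 1)) + 134) * (((q 2 0 - q 0 0)*(q 4 0 - q 0 0) + (q 2 1 - q 0 1)*(q 4 1 - q 0 1)) + 86) = 0 := by
    linear_combination ((-(1:ℝ)/2) * (((q 1 0 - q 0 0)*(q 4 0 - q 0 0) + (q 1 1 - q 0 1)*(q 4 1 - q 0 1))^2 - ((q 1 0 - q 0 0)^2 + (q 1 1 - q 0 1)^2)*((q 4 0 - q 0 0)^2 + (q 4 1 - q 0 1)^2))) * Hs2 + ((-(1:ℝ)/2) * (((q 2 0 - q 0 0)*(q 4 0 - q 0 0) + (q 2 1 - q 0 1)*(q 4 1 - q 0 1))^2 - 58*((q 4 0 - q 0 0)^2 + (q 4 1 - q 0 1)^2))) * Hs1 + ((-(1:ℝ)/2) * (((q 2 0 - q 0 0)*(q 1 0 - q 0 0) + (q 2 1 - q 0 1)*(q 1 1 - q 0 1))^2 - 116)) * Hs4 + ((-(1:ℝ)/2) * (-2*((q 2 0 - q 0 0)*(q 4 0 - q 0 0) + (q 2 1 - q 0 1)*(q 4 1 - q 0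 1))*((q 1 0 - q 0 0)*(q 4 0 - q 0 0) + (q 1 1 - q 0 1)*(q 4 1 - q 0 1)) + 314*(((q 2 0 - q 0 0)*(q 1 0 - q 0 0) + (q 2 1 - q 0 1)*(q 1 1 - q 0 1)) + 10))) * hd12 + ((-(1:ℝ)/2) * (-2*(10:ℝ)*((q 2 0 - q 0 0)*(q 4 0 - q 0 0) + (q 2 1 - q 0 1)*(q 4 1 - q 0 1)) + 58*(((q 1 0 - q 0 0)*(q 4 0 - q 0 0) + (q 1 1 - q 0 1)*(q 4 1 - q 0 1)) + -22))) * hd14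
  have K4 : (((q 2 0 - q 0 0)*(q 4 0 - q 0 0) + (q 2 1 - q 0 1)*(q 4 1 - q 0 1)) + 134) * (809*((q 2 0 - q 0 0)*(q 4 0 - q 0 0) + (q 2 1 - q 0 1)*(q 4 1 - q 0 1)) - 94394) = 0 := by
    linear_combination ((-(1:ℝ)/2) * (((q 3 0 - q 0 0)*(q 4 0 - q 0 0) + (q 3 1 - q 0 1)*(q 4 1 - q 0 1))^2 - ((q 3 0 - q 0 0)^2 + (q 3 1 - q 0 1)^2)*((q 4 0 - q 0 0)^2 + (q 4 1 - q 0 1)^2))) * Hs2 + ((-(1:ℝ)/2) * (((q 2 0 - q 0 0)*(q 4 0 - q 0 0) + (q 2 1 - q 0 1)*(q 4 1 - q 0 1))^2 - 58*((q 4 0 - q 0 0)^2 + (q 4 1 - q 0 1)^2))) * Hs3 + ((-(1:ℝ)/2) * (((q 2 0 - q 0 0)*(q 3 0 - q 0 0) + (q 2 1 - q 0 1)*(q 3 1 - q 0 1))^2 - 93844)) * Hs4 + ((-(1:ℝ)/2) * (-2*((q 2 0 - q 0 0)*(q 4 0 - q 0 0) + (q 2 1 - q 0 1)*(q 4 1 -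 q 0 1))*((q 3 0 - q 0 0)*(q 4 0 - q 0 0) + (q 3 1 - q 0 1)*(q 4 1 - q 0 1)) + 314*(((q 2 0 - q 0 0)*(q 3 0 - q 0 0) + (q 2 1 - q 0 1)*(q 3 1 - q 0 1)) + 62))) * hd23 + ((-(1:ℝ)/2) * (-2*(62:ℝ)*((q 2 0 - q 0 0)*(q 4 0 - q 0 0) + (q 2 1 - q 0 1)*(q 4 1 - q 0 1)) + 58*(((q 3 0 - q 0 0)*(q 4 0 - q 0 0) + (q 3 1 - q 0 1)*(q 4 1 - q 0 1)) + -226))) * hd34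
  have hA : ((q 1 0 - q 0 0)*(q 3 0 - q 0 0) + (q 1 1 - q 0 1)*(q 3 1 - q 0 1)) = -10 := by
    rcases mul_eq_zero.mp K1 with h | h
    · linarith
    · rcases mul_eq_zero.mp K2 with h2 | h2
      · linarith
      · exfalso; linarith
  have hB : ((q 2 0 - q 0 0)*(q 4 0 - q 0 0) + (q 2 1 - q 0 1)*(q 4 1 - q 0 1)) = -134 := by
    rcases mul_eq_zero.mp K3 with h | h
    · linarith
    · rcases mul_eq_zero.mp K4 with h2 | h2
      · linarith
      · exfalso; linarith
  have D00 : dist (rigP 0) (rigP 0) = dist (q 0) (q 0) := by simp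
  have D01 : dist (rigP 0) (rigP 1) = dist (q 0) (q 1) := by
    refine dist_eq_of_sq ?_
    norm_num [rigP_0_0, rigP_0_1, rigP_1_0, rigP_1_1, rigP_2_0, rigP_2_1, rigP_3_0, rigP_3_1, rigP_4_0, rigP_4_1]
    linear_combination -Hs1
  have D02 : dist (rigP 0) (rigP 2) = dist (q 0) (q 2) := by
    refine dist_eq_of_sq ?_
    norm_num [rigP_0_0, rigP_0_1, rigP_1_0, rigP_1_1, rigP_2_0, rigP_2_1, rigP_3_0, rigP_3_1, rigP_4_0, rigP_4_1]
    linear_combination -Hs2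
  have D03 : dist (rigP 0) (rigP 3) = dist (q 0) (q 3) := by
    refine dist_eq_of_sq ?_
    norm_num [rigP_0_0, rigP_0_1, rigP_1_0, rigP_1_1, rigP_2_0, rigP_2_1, rigP_3_0, rigP_3_1, rigP_4_0, rigP_4_1]
    linear_combination -Hs3
  have D04 : dist (rigP 0) (rigP 4) = dist (q 0) (q 4) := by
    refine dist_eq_of_sq ?_
    norm_num [rigP_0_0, rigP_0_1, rigP_1_0, rigP_1_1, rigP_2_0, rigP_2_1, rigP_3_0, rigP_3_1, rigP_4_0, rigP_4_1]
    linear_combination -Hs4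
  have D10 : dist (rigP 1) (rigP 0) = dist (q 1) (q 0) := by
    refine dist_eq_of_sq ?_
    norm_num [rigP_0_0, rigP_0_1, rigP_1_0, rigP_1_1, rigP_2_0, rigP_2_1, rigP_3_0, rigP_3_1, rigP_4_0, rigP_4_1]
    linear_combination -Hs1
  have D11 : dist (rigP 1) (rigP 1) = dist (q 1) (q 1) := by simp
  have D12 : dist (rigP 1) (rigP 2) = dist (q 1) (q 2) := by
    refine dist_eq_of_sq ?_
    norm_num [rigP_0_0, rigP_0_1, rigP_1_0, rigP_1_1, rigP_2_0, rigP_2_1, rigP_3_0, rigP_3_1, rigP_4_0, rigP_4_1]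
    linear_combination -Hr12
  have D13 : dist (rigP 1) (rigP 3) = dist (q 1) (q 3) := by
    refine dist_eq_of_sq ?_
    norm_num [rigP_0_0, rigP_0_1, rigP_1_0, rigP_1_1, rigP_2_0, rigP_2_1, rigP_3_0, rigP_3_1, rigP_4_0, rigP_4_1]
    linear_combination -Hs1 - Hs3 + 2*hA
  have D14 : dist (rigP 1) (rigP 4) = dist (q 1) (q 4) := by
    refine dist_eq_of_sq ?_
    norm_num [rigP_0_0, rigP_0_1, rigP_1_0, rigP_1_1, rigP_2_0, rigP_2_1, rigP_3_0, rigP_3_1, rigP_4_0, rigP_4_1]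
    linear_combination -Hr41
  have D20 : dist (rigP 2) (rigP 0) = dist (q 2) (q 0) := by
    refine dist_eq_of_sq ?_
    norm_num [rigP_0_0, rigP_0_1, rigP_1_0, rigP_1_1, rigP_2_0, rigP_2_1, rigP_3_0, rigP_3_1, rigP_4_0, rigP_4_1]
    linear_combination -Hs2
  have D21 : dist (rigP 2) (rigP 1) = dist (q 2) (q 1) := by
    refine dist_eq_of_sq ?_
    norm_num [rigP_0_0, rigP_0_1, rigP_1_0, rigP_1_1, rigP_2_0, rigP_2_1, rigP_3_0, rigP_3_1, rigP_4_0, rigP_4_1]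
    linear_combination -Hr12
  have D22 : dist (rigP 2) (rigP 2) = dist (q 2) (q 2) := by simp
  have D23 : dist (rigP 2) (rigP 3) = dist (q 2) (q 3) := by
    refine dist_eq_of_sq ?_
    norm_num [rigP_0_0, rigP_0_1, rigP_1_0, rigP_1_1, rigP_2_0, rigP_2_1, rigP_3_0, rigP_3_1, rigP_4_0, rigP_4_1]
    linear_combination -Hr23
  have D24 : dist (rigP 2) (rigP 4) = dist (q 2) (q 4) := by
    refine dist_eq_of_sq ?_
    norm_num [rigP_0_0, rigP_0_1, rigP_1_0, rigP_1_1, rigP_2_0, rigP_2_1, rigP_3_0, rigP_3_1, rigP_4_0, rigP_4_1]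
    linear_combination -Hs2 - Hs4 + 2*hB
  have D30 : dist (rigP 3) (rigP 0) = dist (q 3) (q 0) := by
    refine dist_eq_of_sq ?_
    norm_num [rigP_0_0, rigP_0_1, rigP_1_0, rigP_1_1, rigP_2_0, rigP_2_1, rigP_3_0, rigP_3_1, rigP_4_0, rigP_4_1]
    linear_combination -Hs3
  have D31 : dist (rigP 3) (rigP 1) = dist (q 3) (q 1) := by
    refine dist_eq_of_sq ?_
    norm_num [rigP_0_0, rigP_0_1, rigP_1_0, rigP_1_1, rigP_2_0, rigP_2_1, rigP_3_0, rigP_3_1, rigP_4_0, rigP_4_1]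
    linear_combination -Hs1 - Hs3 + 2*hA
  have D32 : dist (rigP 3) (rigP 2) = dist (q 3) (q 2) := by
    refine dist_eq_of_sq ?_
    norm_num [rigP_0_0, rigP_0_1, rigP_1_0, rigP_1_1, rigP_2_0, rigP_2_1, rigP_3_0, rigP_3_1, rigP_4_0, rigP_4_1]
    linear_combination -Hr23
  have D33 : dist (rigP 3) (rigP 3) = dist (q 3) (q 3) := by simp
  have D34 : dist (rigP 3) (rigP 4) = dist (q 3) (q 4) := by
    refine dist_eq_of_sq ?_
    norm_num [rigP_0_0, rigP_0_1, rigP_1_0, rigP_1_1, rigP_2_0, rigP_2_1, rigP_3_0, rigP_3_1, rigP_4_0, rigP_4_1]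
    linear_combination -Hr34
  have D40 : dist (rigP 4) (rigP 0) = dist (q 4) (q 0) := by
    refine dist_eq_of_sq ?_
    norm_num [rigP_0_0, rigP_0_1, rigP_1_0, rigP_1_1, rigP_2_0, rigP_2_1, rigP_3_0, rigP_3_1, rigP_4_0, rigP_4_1]
    linear_combination -Hs4
  have D41 : dist (rigP 4) (rigP 1) = dist (q 4) (q 1) := by
    refine dist_eq_of_sq ?_
    norm_num [rigP_0_0, rigP_0_1, rigP_1_0, rigP_1_1, rigP_2_0, rigP_2_1, rigP_3_0, rigP_3_1, rigP_4_0, rigP_4_1]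
    linear_combination -Hr41
  have D42 : dist (rigP 4) (rigP 2) = dist (q 4) (q 2) := by
    refine dist_eq_of_sq ?_
    norm_num [rigP_0_0, rigP_0_1, rigP_1_0, rigP_1_1, rigP_2_0, rigP_2_1, rigP_3_0, rigP_3_1, rigP_4_0, rigP_4_1]
    linear_combination -Hs2 - Hs4 + 2*hB
  have D43 : dist (rigP 4) (rigP 3) = dist (q 4) (q 3) := by
    refine dist_eq_of_sq ?_
    norm_num [rigP_0_0, rigP_0_1, rigP_1_0, rigP_1_1, rigP_2_0, rigP_2_1, rigP_3_0, rigP_3_1, rigP_4_0, rigP_4_1]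
    linear_combination -Hr34
  have D44 : dist (rigP 4) (rigP 4) = dist (q 4) (q 4) := by simp
  intro i j
  fin_cases i <;> fin_cases j
  · exact D00
  · exact D01
  · exact D02
  · exact D03
  · exact D04
  · exact D10
  · exact D11
  · exact D12
  · exact D13
  · exact D14
  · exact D20
  · exact D21
  · exact D22
  · exact D23
  · exact D24
  · exact D30
  · exact D31
  · exact D32
  · exact D33
  · exact D34
  · exact D40
  · exact D41
  · exact D42
  · exact D43
  · exact D44

lemma notrigid : ¬ GloballyRigid EW flexP := by
  intro hGR
  have key := hGR flexQ ?_ 1 3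
  · have h := sq_of_dist_eq key
    norm_num [flexP_0_0, flexP_0_1, flexP_1_0, flexP_1_1, flexP_2_0, flexP_2_1, flexP_3_0, flexP_3_1, flexP_4_0, flexP_4_1, flexQ_0_0, flexQ_0_1, flexQ_1_0, flexQ_1_1, flexQ_2_0, flexQ_2_1, flexQ_3_0, flexQ_3_1, flexQ_4_0, flexQ_4_1] at h
  · intro e he
    simp only [EW, Set.mem_insert_iff, Set.mem_singleton_iff] at he
    rcases he with rfl|rfl|rfl|rfl|rfl|rfl|rfl|rfl <;>
      (refine dist_eq_of_sq ?_; norm_num [flexP_0_0, flexP_0_1, flexP_1_0, flexP_1_1, flexP_2_0, flexP_2_1, flexP_3_0, flexP_3_1, flexP_4_0, flexP_4_1, flexQ_0_0, flexQ_0_1, flexQ_1_0, flexQ_1_1, flexQ_2_0, flexQ_2_1, flexQ_3_0, flexQ_3_1, flexQ_4_0, flexQ_4_1])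

end Stmt14Aux

open Stmt14Aux in
/-- Global rigidity in the plane is not affine-invariant: there is a framework that is
not globally rigid whose image under some affine bijection is globally rigid. -/
theorem stmt_14 :
    ∃ (V : Type) (_ : Finite V) (E : Set (V × V)) (p : V → EuclideanSpace ℝ (Fin 2))
      (A : EuclideanSpace ℝ (Fin 2) ≃ᵃ[ℝ] EuclideanSpace ℝ (Fin 2)),
      ¬ GloballyRigid E p ∧ GloballyRigid E (A ∘ p) := by
  refine ⟨Fin 5, inferInstance, EW, flexP, shA, notrigid, ?_⟩
  rw [show ⇑shA ∘ flexP = rigP from comp_eq]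
  exact rigid
end
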